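/- arXiv:quant-ph/0312123 — 3 statements merged into one kernel-verified Lean document; each statement's English description precedes it below -/
import Mathlib

section
/- Let d ≥ 3 and let |φ⟩ = |1⟩_1|2⟩_2(|1⟩_3|1⟩_4 + |2⟩_3|2⟩_4) in (C^d)^{⊗4}. Then for any α, ⟨φ| T_A(α R_{1,2}⊗R_{3,4} + S_{1,2}⊗S_{3,4}) |φ⟩ = (3 − α)/2. In particular this is negative whenever α > 3. -/
open Matrix BigOperators

/-- The projection `P = |Φ⟩⟨Φ|` onto the maximally entangled state
`|Φ⟩ = (1/√d) ∑ᵢ |i⟩|i⟩` on `ℂ^d ⊗ ℂ^d`. -/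
noncomputable def Pm (d : ℕ) : Matrix (Fin d × Fin d) (Fin d × Fin d) ℂ :=
  Matrix.of fun p q =>
    ((if p.1 = p.2 then (1 : ℂ) else 0) * (if q.1 = q.2 then 1 else 0)) / d

/-- The swap operator `F = ∑ᵢⱼ |i⟩⟨j| ⊗ |j⟩⟨i|` on `ℂ^d ⊗ ℂ^d`. -/
def Fm (d : ℕ) : Matrix (Fin d × Fin d) (Fin d × Fin d) ℂ :=
  Matrix.of fun p q => if p.1 = q.2 ∧ p.2 = q.1 then (1 : ℂ) else 0

/-- The antisymmetric projection `R = (I - F)/2`. -/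
noncomputable def Rm (d : ℕ) : Matrix (Fin d × Fin d) (Fin d × Fin d) ℂ :=
  (1 / 2 : ℂ) • (1 - Fm d)

/-- The symmetric projection `S = (I + F)/2`. -/
noncomputable def Sm (d : ℕ) : Matrix (Fin d × Fin d) (Fin d × Fin d) ℂ :=
  (1 / 2 : ℂ) • (1 + Fm d)

/-- `Q = I - |Φ⟩⟨Φ|`. -/
noncomputable def Qm (d : ℕ) : Matrix (Fin d × Fin d) (Fin d × Fin d) ℂ :=
  1 - Pm d

/-- Partial transpose over the first tensor factor of `ℂ^d ⊗ ℂ^d`,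
with respect to the standard basis: entrywise,
`(T M)[(i,j),(k,l)] = M[(k,j),(i,l)]`. -/
def ptA (d : ℕ) (M : Matrix (Fin d × Fin d) (Fin d × Fin d) ℂ) :
    Matrix (Fin d × Fin d) (Fin d × Fin d) ℂ :=
  Matrix.of fun p q => M (q.1, p.2) (p.1, q.2)

/-- Tensor product `M ⊗ N` of two operators on `ℂ^d ⊗ ℂ^d`, acting on
registers `((X₁,X₂),(X₃,X₄))` with `M` on `(X₁,X₂)` and `N` on `(X₃,X₄)`. -/
def kron (d : ℕ) (M N : Matrix (Fin d × Fin d) (Fin d × Fin d) ℂ) :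
    Matrix ((Fin d × Fin d) × (Fin d × Fin d)) ((Fin d × Fin d) × (Fin d × Fin d)) ℂ :=
  Matrix.of fun p q => M p.1 q.1 * N p.2 q.2

/-- Partial transpose over Alice's registers `X₁, X₃` (the first factor of
each pair), on registers ordered `((X₁,X₂),(X₃,X₄))`. -/
def pt13 (d : ℕ)
    (M : Matrix ((Fin d × Fin d) × (Fin d × Fin d)) ((Fin d × Fin d) × (Fin d × Fin d)) ℂ) :
    Matrix ((Fin d × Fin d) × (Fin d × Fin d)) ((Fin d × Fin d) × (Fin d × Fin d)) ℂ :=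
  Matrix.of fun p q =>
    M ((q.1.1, p.1.2), (q.2.1, p.2.2)) ((p.1.1, q.1.2), (p.2.1, q.2.2))

/-- For `|φ⟩ = |1⟩₁|2⟩₂(|1⟩₃|1⟩₄ + |2⟩₃|2⟩₄)` (standard basis indexed from 0 in
Lean, so `|1⟩ ↦ index 0`, `|2⟩ ↦ index 1`), we have
`⟨φ| T_A(α R₁₂⊗R₃₄ + S₁₂⊗S₃₄) |φ⟩ = (3 - α)/2`, which is negative for `α > 3`. -/
theorem stmt10 (d : ℕ) (hd : 3 ≤ d) (α : ℝ) :
    let φ : ((Fin d × Fin d) × (Fin d × Fin d)) → ℂ := fun p =>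
      if p.1.1 = (⟨0, by omega⟩ : Fin d) ∧ p.1.2 = (⟨1, by omega⟩ : Fin d) ∧
          p.2.1 = p.2.2 ∧
          (p.2.1 = (⟨0, by omega⟩ : Fin d) ∨ p.2.1 = (⟨1, by omega⟩ : Fin d))
        then 1 else 0
    (star φ ⬝ᵥ (pt13 d ((α : ℂ) • kron d (Rm d) (Rm d) + kron d (Sm d) (Sm d))).mulVec φ)
        = (((3 - α) / 2 : ℝ) : ℂ) ∧
      (3 < α →
        (star φ ⬝ᵥ (pt13 d ((α : ℂ) • kron d (Rm d) (Rm d) + kron d (Sm d) (Sm d))).mulVec φ).re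
          < 0) := by

  intro φ
  have h0 : (0:ℕ) < d := by omega
  have h1 : (1:ℕ) < d := by omega
  set a : Fin d := ⟨0, by omega⟩ with ha
  set b : Fin d := ⟨1, by omega⟩ with hb
  have hab : a ≠ b := by simp [ha, hb, Fin.ext_iff]
  have hba : b ≠ a := by simp [ha, hb, Fin.ext_iff]
  have hφ : φ = fun p => (if p = ((a, b), (a, a)) then 1 else 0) +
      (if p = ((a, b), (b, b)) then 1 else 0) := by
    funext p
    obtain ⟨⟨x, y⟩, z, w⟩ := p
    simp only [φ, Prod.mk.injEq]
    split_ifs <;> simp_all [ha, hb, Fin.ext_iff] <;> omega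
  have key : ∀ M : Matrix ((Fin d × Fin d) × (Fin d × Fin d))
      ((Fin d × Fin d) × (Fin d × Fin d)) ℂ,
      star φ ⬝ᵥ M.mulVec φ =
        M ((a, b), (a, a)) ((a, b), (a, a)) + M ((a, b), (a, a)) ((a, b), (b, b)) +
        M ((a, b), (b, b)) ((a, b), (a, a)) + M ((a, b), (b, b)) ((a, b), (b, b)) := by
    intro M
    rw [hφ]
    simp only [dotProduct, mulVec, Pi.star_apply, star_add, apply_ite (star : ℂ → ℂ), star_one, star_zero,
      add_mul, mul_add, ite_mul, mul_ite, one_mul, mul_one, zero_mul, mul_zero,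
      Finset.sum_add_distrib, Finset.sum_ite_eq, Finset.sum_ite_eq', Finset.mem_univ, if_true]
    ring
  have hval : star φ ⬝ᵥ (pt13 d ((α : ℂ) • kron d (Rm d) (Rm d) +
      kron d (Sm d) (Sm d))).mulVec φ = (((3 - α) / 2 : ℝ) : ℂ) := by
    rw [key]
    simp only [pt13, kron, Rm, Sm, Fm, Matrix.of_apply, Matrix.add_apply, Matrix.smul_apply,
      Matrix.sub_apply, Matrix.one_apply, Prod.mk.injEq, hab, hba, and_true, and_false,
      if_true, if_false, and_self, true_and, false_and, ite_true, ite_false, smul_eq_mul]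
    push_cast
    ring
  exact ⟨hval, fun h => by rw [hval]; simp; linarith⟩
end

section
/- For α > 3 and d ≥ 3, the (unnormalized) state αR_{1,2}⊗R_{3,4} + S_{1,2}⊗S_{3,4} is 1-distillable: there exists a vector |ψ⟩ of Schmidt rank 2 with respect to the Alice–Bob cut such that ⟨ψ| T_A(αR⊗R + S⊗S) |ψ⟩ < 0. -/
open Matrix BigOperators

lemma aux_dot {n : Type*} [Fintype n] [DecidableEq n] (A : Matrix n n ℂ) (z o : n) :
    star ((Pi.single z 1 + Pi.single o (-1) : n → ℂ)) ⬝ᵥ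
      A.mulVec (Pi.single z 1 + Pi.single o (-1))
    = A z z - A z o - A o z + A o o := by
  have hs : star ((Pi.single z 1 + Pi.single o (-1) : n → ℂ))
      = Pi.single z 1 + Pi.single o (-1) := by
    funext p
    simp only [Pi.star_apply, Pi.add_apply, Pi.single_apply]
    split_ifs <;> simp
  rw [hs, Matrix.mulVec_add, Matrix.mulVec_single, Matrix.mulVec_single,
    add_dotProduct, single_dotProduct, single_dotProduct]
  simp only [Pi.add_apply, Pi.smul_apply, Matrix.col_apply, op_smul_eq_mul]
  ring


set_option maxHeartbeats 1000000 in
set_option maxRecDepth 8000 in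
/-- For `α > 3` the (unnormalized) state `α R₁₂⊗R₃₄ + S₁₂⊗S₃₄` is 1-distillable:
there is a vector `ψ` of Schmidt rank 2 with respect to the Alice–Bob cut
(Alice holds registers 1,3 and Bob registers 2,4; the Schmidt rank is the rank
of the reshaping of `ψ` into an Alice-by-Bob matrix) with
`⟨ψ| T_A(α R⊗R + S⊗S) |ψ⟩ < 0`. -/
theorem stmt11 (d : ℕ) (hd : 3 ≤ d) (α : ℝ) (hα : 3 < α) :
    ∃ ψ : ((Fin d × Fin d) × (Fin d × Fin d)) → ℂ,
      (Matrix.of (fun a b : Fin d × Fin d => ψ ((a.1, b.1), (a.2, b.2))) :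
          Matrix (Fin d × Fin d) (Fin d × Fin d) ℂ).rank = 2 ∧
      (star ψ ⬝ᵥ
          (pt13 d ((α : ℂ) • kron d (Rm d) (Rm d) + kron d (Sm d) (Sm d))).mulVec ψ).re
        < 0 := by
  have h0 : 0 < d := by omega
  have h1 : 1 < d := by omega
  obtain ⟨a, b, hab⟩ : ∃ a b : Fin d, a ≠ b :=
    ⟨⟨0, h0⟩, ⟨1, h1⟩, by simp [Fin.ext_iff]⟩
  have hba : b ≠ a := hab.symm
  refine ⟨Pi.single ((a, a), (a, a)) 1 + Pi.single ((b, b), (b, b)) (-1), ?_, ?_⟩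
  · -- rank
    have hM : (Matrix.of (fun x y : Fin d × Fin d =>
        (Pi.single ((a, a), (a, a)) 1 + Pi.single ((b, b), (b, b)) (-1) :
          ((Fin d × Fin d) × (Fin d × Fin d)) → ℂ) ((x.1, y.1), (x.2, y.2))) :
        Matrix (Fin d × Fin d) (Fin d × Fin d) ℂ)
        = Matrix.diagonal (Pi.single (a, a) 1 + Pi.single (b, b) (-1)) := by
      ext ⟨x1, x2⟩ ⟨y1, y2⟩
      simp only [Matrix.of_apply, Pi.add_apply, Pi.single_apply,
        Matrix.diagonal, Prod.mk.injEq, Prod.ext_iff]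
      by_cases e1 : x1 = a <;> by_cases e2 : x2 = a <;> by_cases e3 : y1 = a <;>
        by_cases e4 : y2 = a <;> by_cases e5 : x1 = b <;> by_cases e6 : x2 = b <;>
        by_cases e7 : y1 = b <;> by_cases e8 : y2 = b <;>
        simp_all <;> first | grind | (split_ifs <;> first | simp_all | norm_num)
    rw [hM, Matrix.rank_diagonal, Fintype.card_subtype]
    have hfil : (Finset.univ.filter fun i : Fin d × Fin d =>
        (Pi.single (a, a) 1 + Pi.single (b, b) (-1) : Fin d × Fin d → ℂ) i ≠ 0)
        = {(a, a), (b, b)} := by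
      ext ⟨i1, i2⟩
      simp only [Finset.mem_filter, Finset.mem_univ, true_and, Finset.mem_insert,
        Finset.mem_singleton, Pi.add_apply, Pi.single_apply, Prod.mk.injEq,
        Prod.ext_iff]
      by_cases e1 : i1 = a <;> by_cases e2 : i2 = a <;> by_cases e3 : i1 = b <;>
        by_cases e4 : i2 = b <;> simp_all
    rw [hfil, Finset.card_insert_of_notMem (by simp [Prod.ext_iff, hab]),
      Finset.card_singleton]
  · -- negativity
    rw [aux_dot]
    have e1 : pt13 d ((α : ℂ) • kron d (Rm d) (Rm d) + kron d (Sm d) (Sm d))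
        ((a, a), (a, a)) ((a, a), (a, a)) = 1 := by
      simp [pt13, kron, Rm, Sm, Fm, Matrix.one_apply]
      norm_num
    have e2 : pt13 d ((α : ℂ) • kron d (Rm d) (Rm d) + kron d (Sm d) (Sm d))
        ((a, a), (a, a)) ((b, b), (b, b)) = ((α : ℂ) + 1) / 4 := by
      simp only [pt13, kron, Rm, Sm, Fm, Matrix.of_apply, Matrix.add_apply,
        Matrix.smul_apply, Matrix.sub_apply, Matrix.one_apply, Prod.mk.injEq,
        hab, hba, smul_eq_mul, and_self, and_true, true_and, and_false, false_and,
        if_true, if_false]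
      norm_num
      ring
    have e3 : pt13 d ((α : ℂ) • kron d (Rm d) (Rm d) + kron d (Sm d) (Sm d))
        ((b, b), (b, b)) ((a, a), (a, a)) = ((α : ℂ) + 1) / 4 := by
      simp only [pt13, kron, Rm, Sm, Fm, Matrix.of_apply, Matrix.add_apply,
        Matrix.smul_apply, Matrix.sub_apply, Matrix.one_apply, Prod.mk.injEq,
        hab, hba, smul_eq_mul, and_self, and_true, true_and, and_false, false_and,
        if_true, if_false]
      norm_num
      ring
    have e4 : pt13 d ((α : ℂ) • kron d (Rm d) (Rm d) + kron d (Sm d) (Sm d))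
        ((b, b), (b, b)) ((b, b), (b, b)) = 1 := by
      simp [pt13, kron, Rm, Sm, Fm, Matrix.one_apply]
      norm_num
    rw [e1, e2, e3, e4]
    have : ((1 : ℂ) - ((α : ℂ) + 1) / 4 - ((α : ℂ) + 1) / 4 + 1)
        = (((3 - α) / 2 : ℝ) : ℂ) := by
      push_cast
      ring
    rw [this, Complex.ofReal_re]
    linarith
end

section
/- One iteration of the measurement protocol maps the state α R_{1,2}⊗R_{3,4} + S_{1,2}⊗S_{3,4} (on registers 1–4) tensored with ρ(ε) (on registers 5–8) to, upon both parties obtaining the P outcome and tracing out registers 1,2,5,6, the state ((d+1)/(2d)) ( α(1 + ε/(d+1)) R_{3,4}⊗R_{7,8} + S_{3,4}⊗S_{7,8} ). -/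
open Matrix BigOperators

/-- The (unnormalized) state `ρ(ε) = ((d+1+ε)/(d-1)) R⊗R + S⊗S`. -/
noncomputable def rhoE (d : ℕ) (ε : ℝ) :
    Matrix ((Fin d × Fin d) × (Fin d × Fin d)) ((Fin d × Fin d) × (Fin d × Fin d)) ℂ :=
  ((((d : ℝ) + 1 + ε) / ((d : ℝ) - 1) : ℝ) : ℂ) • kron d (Rm d) (Rm d)
    + kron d (Sm d) (Sm d)

/-- Index type of eight `d`-dimensional registers, grouped as
`((X₁,X₂),(X₃,X₄),(X₅,X₆),(X₇,X₈))`. -/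
abbrev Idx8 (d : ℕ) :=
  (Fin d × Fin d) × (Fin d × Fin d) × (Fin d × Fin d) × (Fin d × Fin d)

/-- `σ₁₂₃₄ ⊗ τ₅₆₇₈` on eight registers, where `σ` acts on `(X₁,…,X₄)` and
`τ` on `(X₅,…,X₈)`. -/
noncomputable def bigState (d : ℕ)
    (σ τ : Matrix ((Fin d × Fin d) × (Fin d × Fin d)) ((Fin d × Fin d) × (Fin d × Fin d)) ℂ) :
    Matrix (Idx8 d) (Idx8 d) ℂ :=
  Matrix.of fun p q =>
    σ (p.1, p.2.1) (q.1, q.2.1) * τ (p.2.2.1, p.2.2.2) (q.2.2.1, q.2.2.2)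

/-- The measurement projection `P₁₅ ⊗ P₂₆ ⊗ I₃₄₇₈` on eight registers. -/
noncomputable def projPP (d : ℕ) : Matrix (Idx8 d) (Idx8 d) ℂ :=
  Matrix.of fun p q =>
    Pm d (p.1.1, p.2.2.1.1) (q.1.1, q.2.2.1.1) *
      Pm d (p.1.2, p.2.2.1.2) (q.1.2, q.2.2.1.2) *
      (if p.2.1 = q.2.1 ∧ p.2.2.2 = q.2.2.2 then 1 else 0)

/-- Partial trace over registers `X₁, X₂, X₅, X₆`, leaving the four registers
`((X₃,X₄),(X₇,X₈))`. -/
noncomputable def ptrace1256 (d : ℕ) (M : Matrix (Idx8 d) (Idx8 d) ℂ) :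
    Matrix ((Fin d × Fin d) × (Fin d × Fin d)) ((Fin d × Fin d) × (Fin d × Fin d)) ℂ :=
  Matrix.of fun a b =>
    ∑ i : Fin d × Fin d, ∑ j : Fin d × Fin d,
      M (i, a.1, j, a.2) (i, b.1, j, b.2)

/-! ### Auxiliary lemmas -/

lemma projPP_apply (d : ℕ) (p q : Idx8 d) :
    projPP d p q =
      (if p.1 = p.2.2.1 ∧ q.1 = q.2.2.1 ∧ p.2.1 = q.2.1 ∧ p.2.2.2 = q.2.2.2
        then 1 else 0) / ((d : ℂ) * d) := by
  simp only [projPP, Pm, Matrix.of_apply, Prod.ext_iff]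
  split_ifs <;> simp_all

lemma sum_idx8 (d : ℕ) (f : Idx8 d → ℂ) (x y : Fin d × Fin d) :
    ∑ r : Idx8 d, (if r.1 = r.2.2.1 ∧ x = r.2.1 ∧ y = r.2.2.2 then f r else 0)
      = ∑ u : Fin d × Fin d, f (u, x, u, y) := by
  rw [Fintype.sum_prod_type]
  refine Finset.sum_congr rfl fun u _ => ?_
  rw [Fintype.sum_prod_type]
  rw [Finset.sum_eq_single x]
  · rw [Fintype.sum_prod_type]
    rw [Finset.sum_eq_single u]
    · rw [Finset.sum_eq_single y]
      · simp
      · intro c _ hc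
        simp only [ite_eq_right_iff]
        rintro ⟨-, -, h⟩; exact absurd h.symm hc
      · simp
    · intro c _ hc; apply Finset.sum_eq_zero; intro z _; simp [Ne.symm hc, hc]
    · simp
  · intro c _ hc
    apply Finset.sum_eq_zero; intro z _
    simp [hc, Ne.symm hc]
  · simp

lemma sum_idx8' (d : ℕ) (f : Idx8 d → ℂ) (x y : Fin d × Fin d) :
    ∑ r : Idx8 d, (if r.1 = r.2.2.1 ∧ r.2.1 = x ∧ r.2.2.2 = y then f r else 0)
      = ∑ u : Fin d × Fin d, f (u, x, u, y) := by
  rw [← sum_idx8 d f x y]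
  refine Finset.sum_congr rfl fun r _ => ?_
  congr 1
  simp only [eq_iff_iff]
  constructor <;> rintro ⟨h1, h2, h3⟩ <;> exact ⟨h1, h2.symm, h3.symm⟩

lemma projPP_left (d : ℕ) (i j a1 a2 : Fin d × Fin d) (r : Idx8 d) :
    projPP d (i, a1, j, a2) r =
      if i = j then
        (if r.1 = r.2.2.1 ∧ a1 = r.2.1 ∧ a2 = r.2.2.2 then ((d : ℂ) * d)⁻¹ else 0)
      else 0 := by
  rw [projPP_apply, div_eq_mul_inv, ite_mul, one_mul, zero_mul]
  split_ifs <;> tauto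

lemma projPP_right (d : ℕ) (i j b1 b2 : Fin d × Fin d) (s : Idx8 d) :
    projPP d s (i, b1, j, b2) =
      if i = j then
        (if s.1 = s.2.2.1 ∧ s.2.1 = b1 ∧ s.2.2.2 = b2 then ((d : ℂ) * d)⁻¹ else 0)
      else 0 := by
  rw [projPP_apply, div_eq_mul_inv, ite_mul, one_mul, zero_mul]
  split_ifs <;> tauto

lemma core (d : ℕ) (hd : (d : ℂ) ≠ 0)
    (σ τ : Matrix ((Fin d × Fin d) × (Fin d × Fin d)) ((Fin d × Fin d) × (Fin d × Fin d)) ℂ)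
    (a b : (Fin d × Fin d) × (Fin d × Fin d)) :
    ptrace1256 d (projPP d * bigState d σ τ * projPP d) a b =
      ((d : ℂ) * d)⁻¹ *
        ∑ u : Fin d × Fin d, ∑ v : Fin d × Fin d,
          σ (u, a.1) (v, b.1) * τ (u, a.2) (v, b.2) := by
  have key : ∀ i j : Fin d × Fin d,
      (projPP d * bigState d σ τ * projPP d) (i, a.1, j, a.2) (i, b.1, j, b.2) =
      if i = j then
        ((d : ℂ) * d)⁻¹ * ((d : ℂ) * d)⁻¹ *
          ∑ u : Fin d × Fin d, ∑ v : Fin d × Fin d,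
            σ (u, a.1) (v, b.1) * τ (u, a.2) (v, b.2)
      else 0 := by
    intro i j
    rw [Matrix.mul_apply]
    simp only [Matrix.mul_apply, projPP_left, projPP_right]
    by_cases hij : i = j
    · simp only [hij, if_true]
      have step1 : ∀ s : Idx8 d,
          (∑ r : Idx8 d,
            (if r.1 = r.2.2.1 ∧ a.1 = r.2.1 ∧ a.2 = r.2.2.2 then ((d : ℂ) * d)⁻¹ else 0)
              * bigState d σ τ r s)
          = ∑ u : Fin d × Fin d, ((d : ℂ) * d)⁻¹ * bigState d σ τ (u, a.1, u, a.2) s := by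
        intro s
        rw [← sum_idx8 d (fun r => ((d : ℂ) * d)⁻¹ * bigState d σ τ r s) a.1 a.2]
        refine Finset.sum_congr rfl fun r _ => ?_
        rw [ite_mul, zero_mul]
      simp only [step1]
      rw [show (∑ s : Idx8 d,
          (∑ u : Fin d × Fin d, ((d : ℂ) * d)⁻¹ * bigState d σ τ (u, a.1, u, a.2) s) *
            (if s.1 = s.2.2.1 ∧ s.2.1 = b.1 ∧ s.2.2.2 = b.2 then ((d : ℂ) * d)⁻¹ else 0))
          = ∑ s : Idx8 d,
            (if s.1 = s.2.2.1 ∧ s.2.1 = b.1 ∧ s.2.2.2 = b.2 then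
              (∑ u : Fin d × Fin d, ((d : ℂ) * d)⁻¹ * bigState d σ τ (u, a.1, u, a.2) s)
                * ((d : ℂ) * d)⁻¹ else 0)
        from Finset.sum_congr rfl fun s _ => by rw [mul_ite, mul_zero]]
      rw [sum_idx8' d _ b.1 b.2]
      simp only [bigState, Matrix.of_apply]
      rw [Finset.sum_comm]
      simp only [Finset.mul_sum, Finset.sum_mul]
      refine Finset.sum_congr rfl fun u _ => Finset.sum_congr rfl fun v _ => by ring
    · simp [hij]
  simp only [ptrace1256, Matrix.of_apply, key]
  simp only [Finset.sum_ite_eq, Finset.mem_univ, if_true, Finset.sum_const,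
    Finset.card_univ, Fintype.card_prod, Fintype.card_fin, nsmul_eq_mul]
  push_cast
  field_simp

lemma sum_II (d : ℕ) : ∑ u : Fin d × Fin d, ∑ v : Fin d × Fin d,
    ((if u = v then (1:ℂ) else 0) * (if u = v then (1:ℂ) else 0)) = (d : ℂ) * d := by
  simp [ite_and, Fintype.sum_prod_type, Finset.sum_ite_eq, Prod.ext_iff, mul_ite]

lemma sum_IF (d : ℕ) : ∑ u : Fin d × Fin d, ∑ v : Fin d × Fin d,
    ((if u = v then (1:ℂ) else 0) * Fm d u v) = (d : ℂ) := by
  simp [Fm, ite_and, Fintype.sum_prod_type, Finset.sum_ite_eq, Finset.sum_ite_eq',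
    Prod.ext_iff, mul_ite, ite_mul]

lemma sum_FI (d : ℕ) : ∑ u : Fin d × Fin d, ∑ v : Fin d × Fin d,
    (Fm d u v * (if u = v then (1:ℂ) else 0)) = (d : ℂ) := by
  simp [Fm, ite_and, Fintype.sum_prod_type, Finset.sum_ite_eq, Finset.sum_ite_eq',
    Prod.ext_iff, mul_ite, ite_mul]

lemma sum_FF (d : ℕ) : ∑ u : Fin d × Fin d, ∑ v : Fin d × Fin d,
    (Fm d u v * Fm d u v) = (d : ℂ) * d := by
  simp [Fm, ite_and, Fintype.sum_prod_type, Finset.sum_ite_eq, Finset.sum_ite_eq',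
    Prod.ext_iff, mul_ite, ite_mul]

lemma sum_gen (d : ℕ) (c₁ c₂ : ℂ) :
    ∑ u : Fin d × Fin d, ∑ v : Fin d × Fin d,
      (((1/2 : ℂ) • (1 + c₁ • Fm d)) u v * ((1/2 : ℂ) • (1 + c₂ • Fm d)) u v)
      = (1/4 : ℂ) * ((d:ℂ)*d + c₂*d + c₁*d + c₁*c₂*((d:ℂ)*d)) := by
  have h : ∀ u v : Fin d × Fin d,
      ((1/2 : ℂ) • (1 + c₁ • Fm d)) u v * ((1/2 : ℂ) • (1 + c₂ • Fm d)) u v =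
      (1/4 : ℂ) * ((if u = v then (1:ℂ) else 0) * (if u = v then (1:ℂ) else 0))
      + (1/4 * c₂) * ((if u = v then (1:ℂ) else 0) * Fm d u v)
      + (1/4 * c₁) * (Fm d u v * (if u = v then (1:ℂ) else 0))
      + (1/4 * c₁ * c₂) * (Fm d u v * Fm d u v) := by
    intro u v
    simp only [Matrix.smul_apply, Matrix.add_apply, Matrix.one_apply, smul_eq_mul]
    ring
  simp only [h, Finset.sum_add_distrib, ← Finset.mul_sum, sum_II, sum_IF, sum_FI, sum_FF]
  ring

lemma Rm_eq (d : ℕ) : Rm d = (1/2 : ℂ) • (1 + (-1 : ℂ) • Fm d) := by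
  simp [Rm, sub_eq_add_neg, neg_one_smul]

lemma Sm_eq (d : ℕ) : Sm d = (1/2 : ℂ) • (1 + (1 : ℂ) • Fm d) := by simp [Sm]

lemma sumRR (d : ℕ) : ∑ u : Fin d × Fin d, ∑ v : Fin d × Fin d,
    Rm d u v * Rm d u v = ((d : ℂ) * d - d) / 2 := by
  rw [Rm_eq, sum_gen]; ring

lemma sumSS (d : ℕ) : ∑ u : Fin d × Fin d, ∑ v : Fin d × Fin d,
    Sm d u v * Sm d u v = ((d : ℂ) * d + d) / 2 := by
  rw [Sm_eq, sum_gen]; ring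

lemma sumRS (d : ℕ) : ∑ u : Fin d × Fin d, ∑ v : Fin d × Fin d,
    Rm d u v * Sm d u v = 0 := by
  rw [Rm_eq, Sm_eq, sum_gen]; ring

lemma sumSR (d : ℕ) : ∑ u : Fin d × Fin d, ∑ v : Fin d × Fin d,
    Sm d u v * Rm d u v = 0 := by
  rw [Rm_eq, Sm_eq, sum_gen]; ring

/-- One iteration of the protocol: starting from
`α R₁₂⊗R₃₄ + S₁₂⊗S₃₄` on registers 1–4 tensored with `ρ(ε)` on registers 5–8,
upon both parties obtaining the `P` outcome of the `{P,Q}` measurement on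
`(X₁,X₅)` and `(X₂,X₆)` and tracing out registers 1,2,5,6, the resulting
(unnormalized) state on `(X₃,X₄,X₇,X₈)` is
`((d+1)/(2d)) (α(1 + ε/(d+1)) R₃₄⊗R₇₈ + S₃₄⊗S₇₈)`. -/
theorem stmt18 (d : ℕ) (hd : 3 ≤ d) (ε : ℝ) (hε : 0 < ε) (α : ℝ) (hα : 0 ≤ α) :
    ptrace1256 d
        (projPP d *
          bigState d ((α : ℂ) • kron d (Rm d) (Rm d) + kron d (Sm d) (Sm d)) (rhoE d ε) *
          projPP d) =
      ((((d : ℝ) + 1) / (2 * (d : ℝ)) : ℝ) : ℂ) •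
        (((α * (1 + ε / ((d : ℝ) + 1)) : ℝ) : ℂ) • kron d (Rm d) (Rm d)
          + kron d (Sm d) (Sm d)) := by
  have hd0 : (d : ℂ) ≠ 0 := by
    exact_mod_cast Nat.cast_ne_zero.mpr (by omega)
  have hd1 : (d : ℂ) - 1 ≠ 0 := by
    intro h
    have : (d : ℂ) = 1 := by linear_combination h
    have : d = 1 := by exact_mod_cast this
    omega
  have hdp1 : (d : ℂ) + 1 ≠ 0 := by
    intro h
    have : ((d + 1 : ℕ) : ℂ) = 0 := by push_cast; linear_combination h
    have : d + 1 = 0 := by exact_mod_cast this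
    omega
  set c : ℂ := ((((d : ℝ) + 1 + ε) / ((d : ℝ) - 1) : ℝ) : ℂ) with hc
  ext a b
  rw [core d hd0 _ _ a b]
  have h : ∀ u v : Fin d × Fin d,
      ((α : ℂ) • kron d (Rm d) (Rm d) + kron d (Sm d) (Sm d)) (u, a.1) (v, b.1) *
        rhoE d ε (u, a.2) (v, b.2) =
      Rm d u v * Rm d u v * ((α : ℂ) * c * (Rm d a.1 b.1 * Rm d a.2 b.2))
      + Rm d u v * Sm d u v * ((α : ℂ) * (Rm d a.1 b.1 * Sm d a.2 b.2))
      + Sm d u v * Rm d u v * (c * (Sm d a.1 b.1 * Rm d a.2 b.2))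
      + Sm d u v * Sm d u v * (Sm d a.1 b.1 * Sm d a.2 b.2) := by
    intro u v
    simp only [rhoE, ← hc, kron, Matrix.add_apply, Matrix.smul_apply, Matrix.of_apply,
      smul_eq_mul]
    ring
  simp only [h, Finset.sum_add_distrib, ← Finset.sum_mul, sumRR, sumSS, sumRS, sumSR,
    zero_mul, add_zero, zero_add]
  simp only [Matrix.smul_apply, Matrix.add_apply, kron, Matrix.of_apply, smul_eq_mul, hc]
  have hcast : ∀ x : ℝ, ((x : ℝ) : ℂ) = (x : ℂ) := fun _ => rfl
  push_cast
  have hεc : ((ε : ℝ) : ℂ) = (ε : ℂ) := rfl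
  field_simp
end
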